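/- The call-by-name linear substitution calculus is deterministic: if H₁⟨r₁⟩ = H₂⟨r₂⟩ where H₁, H₂ are weak head contexts (generated by H ::= ⟨·⟩ | H t | H[x←t]) and r₁, r₂ are redexes (terms matching the left-hand side of the dB or ls root rules), then H₁ = H₂ and r₁ = r₂. -/
import Mathlib


/-- Terms of the linear substitution calculus:
    `sub t x u` is the explicit substitution `t[x←u]`. -/
inductive Term : Type
  | var : ℕ → Term
  | lam : ℕ → Term → Term
  | app : Term → Term → Term
  | sub : Term → ℕ → Term → Term
deriving DecidableEq

namespace Term

/-- Free variables. -/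
def fv : Term → Finset ℕ
  | var x => {x}
  | lam x t => t.fv.erase x
  | app t u => t.fv ∪ u.fv
  | sub t x u => t.fv.erase x ∪ u.fv

end Term

/-- Substitution contexts `L ::= ⟨·⟩ | L[x←t]`. -/
inductive LCtx : Type
  | hole : LCtx
  | sub : LCtx → ℕ → Term → LCtx
deriving DecidableEq

def LCtx.plug : LCtx → Term → Term
  | .hole, t => t
  | .sub L x u, t => .sub (L.plug t) x u

/-- Weak head contexts `H ::= ⟨·⟩ | H t | H[x←t]`. -/
inductive HCtx : Type
  | hole : HCtx
  | app : HCtx → Term → HCtx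
  | sub : HCtx → ℕ → Term → HCtx
deriving DecidableEq

def HCtx.plug : HCtx → Term → Term
  | .hole, t => t
  | .app H u, t => .app (H.plug t) u
  | .sub H x u, t => .sub (H.plug t) x u

/-- `H.captures x` holds when the hole of `H` lies under a binder for `x`. -/
def HCtx.captures : HCtx → ℕ → Prop
  | .hole, _ => False
  | .app H _, x => H.captures x
  | .sub H y _, x => y = x ∨ H.captures x

/-- Free variables of a weak head context. -/
def HCtx.fv : HCtx → Finset ℕ
  | .hole => ∅
  | .app H t => H.fv ∪ t.fv
  | .sub H y t => H.fv.erase y ∪ t.fv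

/-- Multiplicative (weak-head distance-β) reduction:
    the closure under weak head contexts of `L⟨λx.t⟩ u ↦ L⟨t[x←u]⟩`. -/
inductive Rm : Term → Term → Prop
  | step (H : HCtx) (L : LCtx) (x : ℕ) (t u : Term) :
      Rm (H.plug (.app (L.plug (.lam x t)) u)) (H.plug (L.plug (.sub t x u)))

/-- Exponential (weak linear head substitution) reduction:
    the closure under weak head contexts of `H'⟨x⟩[x←u] ↦ H'⟨u⟩[x←u]`,
    with `x` not captured by `H'`. -/
inductive Re : Term → Term → Prop
  | step (H H' : HCtx) (x : ℕ) (u : Term) :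
      ¬ H'.captures x →
      Re (H.plug (.sub (H'.plug (.var x)) x u)) (H.plug (.sub (H'.plug u) x u))

/-- A redex of the call-by-name LSC: a term matching the left-hand side of
    the `dB` or `ls` root rules. -/
def IsRedex (r : Term) : Prop :=
  (∃ (L : LCtx) (x : ℕ) (t u : Term), r = Term.app (L.plug (.lam x t)) u) ∨
  (∃ (H : HCtx) (x : ℕ) (u : Term), ¬ H.captures x ∧ r = Term.sub (H.plug (.var x)) x u)

lemma varNeLam : ∀ (L : LCtx) (H : HCtx) (x y : ℕ) (t : Term),
    HCtx.plug H (.var x) ≠ LCtx.plug L (.lam y t) := by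
  intro L
  induction L with
  | hole => intro H x y t h; cases H <;> simp [HCtx.plug, LCtx.plug] at h
  | sub L' z u ih =>
    intro H x y t h
    cases H with
    | hole => simp [HCtx.plug, LCtx.plug] at h
    | app H' s => simp [HCtx.plug, LCtx.plug] at h
    | sub H' z' u' =>
      simp only [HCtx.plug, LCtx.plug, Term.sub.injEq] at h
      exact ih H' x y t h.1

lemma varUnique : ∀ (H₁ H₂ : HCtx) (x y : ℕ),
    ¬ H₁.captures x → ¬ H₂.captures y →
    H₁.plug (.var x) = H₂.plug (.var y) → H₁ = H₂ ∧ x = y := by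
  intro H₁
  induction H₁ with
  | hole =>
    intro H₂ x y _ _ h
    cases H₂ <;> simp_all [HCtx.plug]
  | app H t ih =>
    intro H₂ x y hc1 hc2 h
    cases H₂ with
    | hole => simp [HCtx.plug] at h
    | app H' t' =>
      simp only [HCtx.plug, Term.app.injEq] at h
      simp only [HCtx.captures] at hc1 hc2
      obtain ⟨h1, h2⟩ := ih H' x y hc1 hc2 h.1
      exact ⟨by rw [h1, h.2], h2⟩
    | sub H' z u => simp [HCtx.plug] at h
  | sub H z u ih =>
    intro H₂ x y hc1 hc2 h
    cases H₂ with
    | hole => simp [HCtx.plug] at h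
    | app H' t' => simp [HCtx.plug] at h
    | sub H' z' u' =>
      simp only [HCtx.plug, Term.sub.injEq] at h
      simp only [HCtx.captures, not_or] at hc1 hc2
      obtain ⟨h1, h2⟩ := ih H' x y hc1.2 hc2.2 h.1
      exact ⟨by rw [h1, h.2.1, h.2.2], h2⟩

lemma redexNeLam : ∀ (L : LCtx) (H : HCtx) (r : Term) (y : ℕ) (t : Term),
    IsRedex r → H.plug r ≠ L.plug (.lam y t) := by
  intro L
  induction L with
  | hole =>
    intro H r y t hr h
    cases H with
    | hole =>
      simp only [HCtx.plug, LCtx.plug] at h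
      rcases hr with ⟨_, _, _, _, rfl⟩ | ⟨_, _, _, _, rfl⟩ <;> simp at h
    | app H' s => simp [HCtx.plug, LCtx.plug] at h
    | sub H' z u => simp [HCtx.plug, LCtx.plug] at h
  | sub L' z u ih =>
    intro H r y t hr h
    cases H with
    | hole =>
      simp only [HCtx.plug, LCtx.plug] at h
      rcases hr with ⟨_, _, _, _, rfl⟩ | ⟨H', x, v, hc, rfl⟩
      · simp at h
      · simp only [Term.sub.injEq] at h
        exact varNeLam L' H' x y t h.1
    | app H' s => simp [HCtx.plug, LCtx.plug] at h
    | sub H' z' u' =>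
      simp only [HCtx.plug, LCtx.plug, Term.sub.injEq] at h
      exact ih H' r y t hr h.1

lemma redexNeVar : ∀ (H' H : HCtx) (r : Term) (x : ℕ),
    IsRedex r → ¬ H'.captures x → H.plug r ≠ H'.plug (.var x) := by
  intro H'
  induction H' with
  | hole =>
    intro H r x hr _ h
    cases H with
    | hole =>
      simp only [HCtx.plug] at h
      rcases hr with ⟨_, _, _, _, rfl⟩ | ⟨_, _, _, _, rfl⟩ <;> simp at h
    | app H₀ s => simp [HCtx.plug] at h
    | sub H₀ z u => simp [HCtx.plug] at h
  | app H'' t ih =>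
    intro H r x hr hc h
    simp only [HCtx.captures] at hc
    cases H with
    | hole =>
      simp only [HCtx.plug] at h
      rcases hr with ⟨L, y, s, v, rfl⟩ | ⟨_, _, _, _, rfl⟩
      · simp only [Term.app.injEq] at h
        exact varNeLam L H'' x y s h.1.symm
      · simp at h
    | app H₀ s =>
      simp only [HCtx.plug, Term.app.injEq] at h
      exact ih H₀ r x hr hc h.1
    | sub H₀ z u => simp [HCtx.plug] at h
  | sub H'' y s ih =>
    intro H r x hr hc h
    simp only [HCtx.captures, not_or] at hc
    cases H with
    | hole =>
      simp only [HCtx.plug] at h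
      rcases hr with ⟨_, _, _, _, rfl⟩ | ⟨H₀, z, v, hc0, rfl⟩
      · simp at h
      · simp only [Term.sub.injEq] at h
        obtain ⟨h1, rfl, rfl⟩ := h
        obtain ⟨_, h2⟩ := varUnique H₀ H'' z x hc0 hc.2 h1
        exact hc.1 h2
    | app H₀ t' => simp [HCtx.plug] at h
    | sub H₀ z u =>
      simp only [HCtx.plug, Term.sub.injEq] at h
      exact ih H₀ r x hr hc.2 h.1

/-- Determinism of the call-by-name linear substitution calculus. -/
theorem name_determinism (H₁ H₂ : HCtx) (r₁ r₂ : Term)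
    (h₁ : IsRedex r₁) (h₂ : IsRedex r₂)
    (heq : H₁.plug r₁ = H₂.plug r₂) :
    H₁ = H₂ ∧ r₁ = r₂ := by
  induction H₁ generalizing H₂ with
  | hole =>
    cases H₂ with
    | hole => exact ⟨rfl, heq⟩
    | app H₂' t =>
      exfalso
      simp only [HCtx.plug] at heq
      rcases h₁ with ⟨L, x, s, u, rfl⟩ | ⟨_, _, _, _, rfl⟩
      · simp only [Term.app.injEq] at heq
        exact redexNeLam L H₂' r₂ x s h₂ heq.1.symm
      · simp at heq
    | sub H₂' y t =>
      exfalso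
      simp only [HCtx.plug] at heq
      rcases h₁ with ⟨_, _, _, _, rfl⟩ | ⟨H', x, u, hc, rfl⟩
      · simp at heq
      · simp only [Term.sub.injEq] at heq
        exact redexNeVar H' H₂' r₂ x h₂ hc heq.1.symm
  | app H₁' t ih =>
    cases H₂ with
    | hole =>
      exfalso
      simp only [HCtx.plug] at heq
      rcases h₂ with ⟨L, x, s, u, rfl⟩ | ⟨_, _, _, _, rfl⟩
      · simp only [Term.app.injEq] at heq
        exact redexNeLam L H₁' r₁ x s h₁ heq.1
      · simp at heq
    | app H₂' t' =>
      simp only [HCtx.plug, Term.app.injEq] at heq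
      obtain ⟨h1, h2⟩ := ih H₂' heq.1
      exact ⟨by rw [h1, heq.2], h2⟩
    | sub H₂' y t' => simp [HCtx.plug] at heq
  | sub H₁' y t ih =>
    cases H₂ with
    | hole =>
      exfalso
      simp only [HCtx.plug] at heq
      rcases h₂ with ⟨_, _, _, _, rfl⟩ | ⟨H', x, u, hc, rfl⟩
      · simp at heq
      · simp only [Term.sub.injEq] at heq
        exact redexNeVar H' H₁' r₁ x h₁ hc heq.1
    | app H₂' t' => simp [HCtx.plug] at heq
    | sub H₂' y' t' =>
      simp only [HCtx.plug, Term.sub.injEq] at heq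
      obtain ⟨h1, h2⟩ := ih H₂' heq.1
      exact ⟨by rw [h1, heq.2.1, heq.2.2], h2⟩
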